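/- Let A be the adjacency matrix of an undirected graph with 1ᵀd > 0 where d = A·1, and let ℓ be an odd positive integer. Then for x = A^ℓ·1 (walk centrality), (dᵀx)/(1ᵀd) ≥ (1ᵀx)/n, with equality if and only if the graph is regular. -/

import Mathlib

open Matrix Finset
open scoped RealInnerProductSpace

private lemma cheb_identity {n : ℕ} (c μ : Fin n → ℝ) (ℓ : ℕ) :
    ∑ i, ∑ j, c i * c j * ((μ i - μ j) * (μ i ^ ℓ - μ j ^ ℓ)) =
    2 * ((∑ i, c i) * (∑ i, c i * μ i ^ (ℓ + 1)) -
      (∑ i, c i * μ i) * (∑ i, c i * μ i ^ ℓ)) := by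
  have expand : ∀ i j : Fin n, c i * c j * ((μ i - μ j) * (μ i ^ ℓ - μ j ^ ℓ)) =
      c i * μ i ^ (ℓ + 1) * c j - c i * μ i * (c j * μ j ^ ℓ)
        - c i * μ i ^ ℓ * (c j * μ j) + c i * (c j * μ j ^ (ℓ + 1)) := by
    intro i j; ring
  simp only [expand, Finset.sum_add_distrib, Finset.sum_sub_distrib,
    ← Finset.sum_mul, ← Finset.mul_sum]
  ring

private lemma odd_factor_nonneg (a b : ℝ) {ℓ : ℕ} (h : Odd ℓ) :
    0 ≤ (a - b) * (a ^ ℓ - b ^ ℓ) := by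
  rcases le_total a b with hab | hab
  · exact mul_nonneg_iff.2 (Or.inr ⟨by linarith,
      by simpa using sub_nonpos.2 (h.strictMono_pow.le_iff_le.2 hab)⟩)
  · exact mul_nonneg (by linarith)
      (by simpa using sub_nonneg.2 (h.strictMono_pow.le_iff_le.2 hab))

private lemma odd_factor_eq_zero (a b : ℝ) {ℓ : ℕ} (h : Odd ℓ)
    (hz : (a - b) * (a ^ ℓ - b ^ ℓ) = 0) : a = b := by
  by_contra hne
  exact (mul_ne_zero (sub_ne_zero.2 hne)
    (sub_ne_zero.2 fun e => hne (h.strictMono_pow.injective e))) hz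

private lemma spectral_sums {n : ℕ} {A : Matrix (Fin n) (Fin n) ℝ} (hsym : A.IsSymm) :
    ∃ c μ : Fin n → ℝ, (∀ i, 0 ≤ c i) ∧
      ∀ k : ℕ, ((fun _ => (1:ℝ)) ⬝ᵥ ((A ^ k) *ᵥ (fun _ => 1))) = ∑ i, c i * μ i ^ k := by
  have hA : A.IsHermitian := by
    rw [Matrix.IsHermitian, Matrix.conjTranspose_eq_transpose_of_trivial]; exact hsym
  refine ⟨fun i => ((⇑(hA.eigenvectorBasis i) : Fin n → ℝ) ⬝ᵥ (fun _ => 1)) ^ 2,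
    hA.eigenvalues, fun i => sq_nonneg _, fun k => ?_⟩
  have inner_eq : ∀ u v : EuclideanSpace ℝ (Fin n),
      ⟪u, v⟫ = (⇑u : Fin n → ℝ) ⬝ᵥ (⇑v : Fin n → ℝ) := by
    intro u v; simp [PiLp.inner_apply, RCLike.inner_apply, dotProduct, mul_comm]
  have hpowvec : ∀ (k : ℕ) (i : Fin n),
      (A ^ k) *ᵥ ⇑(hA.eigenvectorBasis i) = (hA.eigenvalues i ^ k) • ⇑(hA.eigenvectorBasis i) := by
    intro k i
    induction k with
    | zero => simp [Matrix.one_mulVec]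
    | succ k ih =>
      rw [pow_succ', ← Matrix.mulVec_mulVec, ih, Matrix.mulVec_smul,
        hA.mulVec_eigenvectorBasis, smul_smul, ← pow_succ]
  have hsympow : ∀ k : ℕ, (A ^ k)ᵀ = A ^ k := by
    intro k; rw [Matrix.transpose_pow, hsym]
  have hdotmul : ∀ (v w : Fin n → ℝ), v ⬝ᵥ ((A ^ k) *ᵥ w) = ((A ^ k) *ᵥ v) ⬝ᵥ w := by
    intro v w
    rw [Matrix.dotProduct_mulVec, ← Matrix.vecMul_transpose, hsympow]
  have hP := (hA.eigenvectorBasis).sum_inner_mul_inner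
    (WithLp.toLp 2 ((fun _ => (1:ℝ)) : Fin n → ℝ) : EuclideanSpace ℝ (Fin n))
    (WithLp.toLp 2 (((A ^ k) *ᵥ (fun _ => (1:ℝ)) : Fin n → ℝ)) : EuclideanSpace ℝ (Fin n))
  simp only [inner_eq, WithLp.ofLp_toLp] at hP
  refine hP.symm.trans (Finset.sum_congr rfl fun i _ => ?_)
  show ((fun _ => (1:ℝ)) ⬝ᵥ (⇑(hA.eigenvectorBasis i) : Fin n → ℝ)) *
      ((⇑(hA.eigenvectorBasis i) : Fin n → ℝ) ⬝ᵥ ((A ^ k) *ᵥ (fun _ => 1)))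
    = ((⇑(hA.eigenvectorBasis i) : Fin n → ℝ) ⬝ᵥ (fun _ => 1)) ^ 2 * hA.eigenvalues i ^ k
  rw [show (⇑(hA.eigenvectorBasis i) : Fin n → ℝ) ⬝ᵥ ((A ^ k) *ᵥ (fun _ => 1)) =
      ((A ^ k) *ᵥ ⇑(hA.eigenvectorBasis i)) ⬝ᵥ (fun _ => 1) from hdotmul _ _,
    hpowvec k i, smul_dotProduct, dotProduct_comm]
  simp only [smul_eq_mul]
  ring

set_option maxHeartbeats 1600000 in
theorem global_friendship_paradox_walk
    (n : ℕ) (hn : 0 < n) (A : Matrix (Fin n) (Fin n) ℝ)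
    (hsym : A.IsSymm)
    (h01 : ∀ i j, A i j = 0 ∨ A i j = 1)
    (hdiag : ∀ i, A i i = 0)
    (d : Fin n → ℝ) (hd : d = A.mulVec (fun _ => 1))
    (hdpos : 0 < ∑ i, d i)
    (ℓ : ℕ) (hℓpos : 0 < ℓ) (hℓodd : Odd ℓ)
    (x : Fin n → ℝ) (hx : x = (A ^ ℓ).mulVec (fun _ => 1)) :
    (∑ i, d i * x i) / (∑ i, d i) ≥ (∑ i, x i) / (n : ℝ) ∧
    ((∑ i, d i * x i) / (∑ i, d i) = (∑ i, x i) / (n : ℝ) ↔ ∀ i j, d i = d j) := by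
  classical
  obtain ⟨c, μ, hcpos, hSspec⟩ := spectral_sums hsym
  set S : ℕ → ℝ := fun k => ((fun _ => (1:ℝ)) ⬝ᵥ ((A ^ k) *ᵥ (fun _ => 1))) with hS
  have hSspec : ∀ k, S k = ∑ i, c i * μ i ^ k := hSspec
  have hsympow : ∀ k : ℕ, (A ^ k)ᵀ = A ^ k := by
    intro k; rw [Matrix.transpose_pow, hsym]
  have hdotmul : ∀ (k : ℕ) (v w : Fin n → ℝ),
      ((A ^ k) *ᵥ v) ⬝ᵥ w = v ⬝ᵥ ((A ^ k) *ᵥ w) := by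
    intro k v w
    rw [Matrix.dotProduct_mulVec, ← Matrix.vecMul_transpose, hsympow]
  -- the three sums
  have hS1 : ∑ i, d i = S 1 := by
    simp [hS, hd, dotProduct, pow_one]
  have hSl : ∑ i, x i = S ℓ := by
    simp [hS, hx, dotProduct]
  have hSl1 : ∑ i, d i * x i = S (ℓ + 1) := by
    have e : ∑ i, d i * x i = (A *ᵥ fun _ => 1) ⬝ᵥ ((A ^ ℓ) *ᵥ fun _ => 1) := by
      rw [hd, hx]; rfl
    rw [e, show A *ᵥ (fun _ => (1:ℝ)) = (A ^ 1) *ᵥ (fun _ => 1) by rw [pow_one],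
      hdotmul 1, Matrix.mulVec_mulVec, pow_one, ← pow_succ']
  have hS0 : S 0 = (n : ℝ) := by
    simp [hS, Matrix.one_mulVec, dotProduct]
  have hcn : ∑ i, c i = (n : ℝ) := by
    have := hSspec 0; simp only [pow_zero, mul_one] at this; rw [← this, hS0]
  -- key identity
  have key : ∑ i, ∑ j, c i * c j * ((μ i - μ j) * (μ i ^ ℓ - μ j ^ ℓ))
      = 2 * (S 0 * S (ℓ + 1) - S 1 * S ℓ) := by
    rw [cheb_identity c μ ℓ, hSspec (ℓ + 1), hSspec ℓ, hSspec 1, hS0, ← hcn]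
    simp [pow_one]
  have term_nonneg : ∀ i j : Fin n,
      0 ≤ c i * c j * ((μ i - μ j) * (μ i ^ ℓ - μ j ^ ℓ)) := fun i j =>
    mul_nonneg (mul_nonneg (hcpos i) (hcpos j)) (odd_factor_nonneg _ _ hℓodd)
  have dbl_nonneg : 0 ≤ ∑ i, ∑ j, c i * c j * ((μ i - μ j) * (μ i ^ ℓ - μ j ^ ℓ)) :=
    Finset.sum_nonneg fun i _ => Finset.sum_nonneg fun j _ => term_nonneg i j
  have main : S 1 * S ℓ ≤ S 0 * S (ℓ + 1) := by
    rw [key] at dbl_nonneg; linarith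
  have hnpos : (0:ℝ) < n := by exact_mod_cast hn
  constructor
  · rw [ge_iff_le, div_le_div_iff₀ hnpos hdpos, hS1, hSl, hSl1]
    calc S ℓ * S 1 = S 1 * S ℓ := by ring
    _ ≤ S 0 * S (ℓ + 1) := main
    _ = S (ℓ + 1) * (n : ℝ) := by rw [hS0]; ring
  constructor
  · -- equality implies regular
    intro heq
    have heq' : S 0 * S (ℓ + 1) = S 1 * S ℓ := by
      rw [div_eq_div_iff hdpos.ne' hnpos.ne', hS1, hSl, hSl1, ← hS0] at heq
      linarith
    have hz : ∑ i, ∑ j, c i * c j * ((μ i - μ j) * (μ i ^ ℓ - μ j ^ ℓ)) = 0 := by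
      rw [key, heq']; ring
    have hterm : ∀ i j : Fin n, c i * c j * ((μ i - μ j) * (μ i ^ ℓ - μ j ^ ℓ)) = 0 := by
      intro i j
      have h1 := (Finset.sum_eq_zero_iff_of_nonneg
        (fun i _ => Finset.sum_nonneg fun j _ => term_nonneg i j)).1 hz i (Finset.mem_univ i)
      exact (Finset.sum_eq_zero_iff_of_nonneg
        (fun j _ => term_nonneg i j)).1 h1 j (Finset.mem_univ j)
    have hsupp : ∀ i j : Fin n, c i ≠ 0 → c j ≠ 0 → μ i = μ j := by
      intro i j hi hj
      rcases mul_eq_zero.1 (hterm i j) with h | h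
      · exact absurd h (mul_ne_zero hi hj)
      · exact odd_factor_eq_zero _ _ hℓodd h
    -- variance is zero
    have hS2 : S 0 * S 2 = S 1 * S 1 := by
      have key1 : ∑ i, ∑ j, c i * c j * ((μ i - μ j) * (μ i ^ 1 - μ j ^ 1))
          = 2 * (S 0 * S (1 + 1) - S 1 * S 1) := by
        rw [cheb_identity c μ 1, hSspec (1 + 1), hSspec 1, hS0, ← hcn]
        simp [pow_one]
      have hz1 : ∀ i j : Fin n, c i * c j * ((μ i - μ j) * (μ i ^ 1 - μ j ^ 1)) = 0 := by
        intro i j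
        by_cases hi : c i = 0
        · simp [hi]
        by_cases hj : c j = 0
        · simp [hj]
        · rw [hsupp i j hi hj]; ring
      have hz2 : ∑ i, ∑ j, c i * c j * ((μ i - μ j) * (μ i ^ 1 - μ j ^ 1)) = 0 := by
        simp only [hz1, Finset.sum_const_zero]
      rw [hz2] at key1
      have : S 0 * S (1 + 1) = S 1 * S 1 := by linarith
      simpa using this
    have hd2 : ∑ i, d i ^ 2 = S 2 := by
      have e : ∑ i, d i ^ 2 = (A *ᵥ fun _ => 1) ⬝ᵥ (A *ᵥ fun _ => 1) := by
        rw [hd]; simp [dotProduct, sq]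
      rw [e, show A *ᵥ (fun _ => (1:ℝ)) = (A ^ 1) *ᵥ (fun _ => 1) by rw [pow_one],
        hdotmul 1, Matrix.mulVec_mulVec, ← pow_add]
    set m : ℝ := S 1 / n with hm
    have hvar : ∑ i, (d i - m) ^ 2 = 0 := by
      have e1 : ∑ i, (d i - m) ^ 2
          = (∑ i, d i ^ 2) - 2 * m * (∑ i, d i) + n * m ^ 2 := by
        rw [Finset.sum_congr rfl fun i (_ : i ∈ univ) =>
          show (d i - m) ^ 2 = d i ^ 2 - 2 * m * d i + m ^ 2 by ring]
        rw [Finset.sum_add_distrib, Finset.sum_sub_distrib, ← Finset.mul_sum]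
        simp [Finset.card_univ, mul_comm]
      rw [e1, hd2, hS1, hm]
      have h2 : S 2 = S 1 * S 1 / n := by
        rw [hS0] at hS2; field_simp at hS2 ⊢; linarith
      rw [h2]
      field_simp
      ring
    intro i j
    have hdz := (Finset.sum_eq_zero_iff_of_nonneg
      (fun i (_ : i ∈ univ) => sq_nonneg (d i - m))).1 hvar
    have hi : d i = m := by
      have := hdz i (Finset.mem_univ i); nlinarith [this]
    have hj : d j = m := by
      have := hdz j (Finset.mem_univ j); nlinarith [this]
    rw [hi, hj]
  · -- regular implies equality
    intro hreg
    have i0 : Fin n := ⟨0, hn⟩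
    set cst : ℝ := d i0 with hcst
    have hdc : ∀ i, d i = cst := fun i => hreg i i0
    have hsd : ∑ i, d i = n * cst := by
      rw [Finset.sum_congr rfl fun i (_ : i ∈ univ) => hdc i,
        Finset.sum_const, Finset.card_univ, Fintype.card_fin, nsmul_eq_mul]
    have hcstpos : 0 < cst := by
      by_contra h
      push_neg at h
      have : ∑ i, d i ≤ 0 := by
        rw [hsd]
        exact mul_nonpos_of_nonneg_of_nonpos (by positivity) h
      linarith
    have hAone : A *ᵥ (fun _ => (1:ℝ)) = fun _ => cst := by
      rw [← hd]; funext i; exact hdc i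
    have hk : ∀ k : ℕ, (A ^ k) *ᵥ (fun _ => (1:ℝ)) = fun _ => cst ^ k := by
      intro k
      induction k with
      | zero =>
        rw [pow_zero, Matrix.one_mulVec]; funext i; rw [pow_zero]
      | succ k ih =>
        rw [pow_succ', ← Matrix.mulVec_mulVec, ih]
        have e : (fun _ => cst ^ k : Fin n → ℝ) = cst ^ k • (fun _ => (1:ℝ)) := by
          funext t; simp
        rw [e, Matrix.mulVec_smul, hAone]
        funext i
        simp [pow_succ, mul_comm]
    have hxc : ∀ i, x i = cst ^ ℓ := by
      intro i; rw [hx, hk ℓ]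
    have hsx : ∑ i, x i = n * cst ^ ℓ := by
      rw [Finset.sum_congr rfl fun i (_ : i ∈ univ) => hxc i,
        Finset.sum_const, Finset.card_univ, Fintype.card_fin, nsmul_eq_mul]
    have hsdx : ∑ i, d i * x i = n * cst ^ (ℓ + 1) := by
      rw [Finset.sum_congr rfl fun i (_ : i ∈ univ) => by rw [hdc i, hxc i],
        Finset.sum_const, Finset.card_univ, Fintype.card_fin, nsmul_eq_mul, pow_succ]
      ring
    rw [hsd, hsx, hsdx]
    have hn' : (n:ℝ) ≠ 0 := by positivity
    field_simp
    ring
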